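/- Let k ≥ 1 and let Q^L, Q^R ∈ Matrix (Fin (k+1)) (Fin (k+1)) ℝ each satisfy the element summation-by-parts property Q^L + (Q^L)ᵀ = B̃^e and Q^R + (Q^R)ᵀ = B̃^e, where B̃^e = diag(−1, 0, …, 0, 1) is of size k+1. Define the assembled global matrix K ∈ Matrix (Fin (2k+1)) (Fin (2k+1)) ℝ by K_{ij} = Q^L_{ij} if i ≤ k and j ≤ k, plus Q^R_{(i−k)(j−k)} if i ≥ k and j ≥ k (so the entry (k,k) is Q^L_{kk} + Q^R_{00}), and K_{ij} = 0 otherwise. Then K satisfies the global summation-by-parts property K + Kᵀ = diag(−1, 0, …, 0, 1) of size 2k+1. -/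

import Mathlib

open Matrix

/-- Continuous-Galerkin assembly of two element-level SBP operators preserves the
summation-by-parts property: the assembled global matrix `K` on a two-element mesh
satisfies `K + Kᵀ = diag(-1,0,…,0,1)` of size `2k+1`. -/
theorem assembled_global_sbp
    (k : ℕ) (hk : 1 ≤ k)
    (QL QR : Matrix (Fin (k + 1)) (Fin (k + 1)) ℝ)
    (hQL : ∀ i j, (QL + QLᵀ) i j =
      (if i = Fin.last k then (1 : ℝ) else 0) * (if j = Fin.last k then (1 : ℝ) else 0)
        - (if i = 0 then (1 : ℝ) else 0) * (if j = 0 then (1 : ℝ) else 0))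
    (hQR : ∀ i j, (QR + QRᵀ) i j =
      (if i = Fin.last k then (1 : ℝ) else 0) * (if j = Fin.last k then (1 : ℝ) else 0)
        - (if i = 0 then (1 : ℝ) else 0) * (if j = 0 then (1 : ℝ) else 0))
    (K : Matrix (Fin (2 * k + 1)) (Fin (2 * k + 1)) ℝ)
    (hK : ∀ i j : Fin (2 * k + 1), K i j =
      (if h : i.val ≤ k ∧ j.val ≤ k then
          QL ⟨i.val, by omega⟩ ⟨j.val, by omega⟩ else 0)
        + (if h : k ≤ i.val ∧ k ≤ j.val then
            QR ⟨i.val - k, by omega⟩ ⟨j.val - k, by omega⟩ else 0)) :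
    ∀ i j : Fin (2 * k + 1), (K + Kᵀ) i j =
      (if i = Fin.last (2 * k) then (1 : ℝ) else 0) *
          (if j = Fin.last (2 * k) then (1 : ℝ) else 0)
        - (if i = 0 then (1 : ℝ) else 0) * (if j = 0 then (1 : ℝ) else 0) := by
  intro i j
  have hiv := i.isLt
  have hjv := j.isLt
  have HL : ∀ a b : Fin (k + 1), QL a b + QL b a =
      (if (a : ℕ) = k then (1 : ℝ) else 0) * (if (b : ℕ) = k then (1 : ℝ) else 0)
        - (if (a : ℕ) = 0 then (1 : ℝ) else 0) * (if (b : ℕ) = 0 then (1 : ℝ) else 0) := by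
    intro a b
    simpa [Matrix.add_apply, Matrix.transpose_apply, Fin.ext_iff, -Fin.val_eq_zero_iff] using hQL a b
  have HR : ∀ a b : Fin (k + 1), QR a b + QR b a =
      (if (a : ℕ) = k then (1 : ℝ) else 0) * (if (b : ℕ) = k then (1 : ℝ) else 0)
        - (if (a : ℕ) = 0 then (1 : ℝ) else 0) * (if (b : ℕ) = 0 then (1 : ℝ) else 0) := by
    intro a b
    simpa [Matrix.add_apply, Matrix.transpose_apply, Fin.ext_iff, -Fin.val_eq_zero_iff] using hQR a b
  have hgi : (i = Fin.last (2 * k)) ↔ (i : ℕ) = 2 * k := by simp [Fin.ext_iff]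
  have hgj : (j = Fin.last (2 * k)) ↔ (j : ℕ) = 2 * k := by simp [Fin.ext_iff]
  have hzi : (i = 0) ↔ (i : ℕ) = 0 := by simp [Fin.ext_iff, -Fin.val_eq_zero_iff]
  have hzj : (j = 0) ↔ (j : ℕ) = 0 := by simp [Fin.ext_iff, -Fin.val_eq_zero_iff]
  simp only [Matrix.add_apply, Matrix.transpose_apply, hgi, hgj, hzi, hzj]
  rw [hK i j, hK j i]
  rcases Nat.lt_trichotomy (i : ℕ) k with hi | hi | hi <;>
    rcases Nat.lt_trichotomy (j : ℕ) k with hj | hj | hj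
  · -- i < k, j < k : QL only
    rw [dif_pos (show (i:ℕ) ≤ k ∧ (j:ℕ) ≤ k by omega),
        dif_neg (show ¬(k ≤ (i:ℕ) ∧ k ≤ (j:ℕ)) by omega),
        dif_pos (show (j:ℕ) ≤ k ∧ (i:ℕ) ≤ k by omega),
        dif_neg (show ¬(k ≤ (j:ℕ) ∧ k ≤ (i:ℕ)) by omega)]
    have e1 := HL ⟨(i:ℕ), by omega⟩ ⟨(j:ℕ), by omega⟩
    simp only [Fin.val_mk] at e1
    rw [if_neg (show ¬((i:ℕ) = k) by omega), if_neg (show ¬((j:ℕ) = k) by omega)] at e1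
    rw [if_neg (show ¬((i:ℕ) = 2*k) by omega), if_neg (show ¬((j:ℕ) = 2*k) by omega)]
    linarith
  · -- i < k, j = k : QL only
    rw [dif_pos (show (i:ℕ) ≤ k ∧ (j:ℕ) ≤ k by omega),
        dif_neg (show ¬(k ≤ (i:ℕ) ∧ k ≤ (j:ℕ)) by omega),
        dif_pos (show (j:ℕ) ≤ k ∧ (i:ℕ) ≤ k by omega),
        dif_neg (show ¬(k ≤ (j:ℕ) ∧ k ≤ (i:ℕ)) by omega)]
    have e1 := HL ⟨(i:ℕ), by omega⟩ ⟨(j:ℕ), by omega⟩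
    simp only [Fin.val_mk] at e1
    rw [if_neg (show ¬((i:ℕ) = k) by omega), if_pos (show (j:ℕ) = k by omega),
        if_neg (show ¬((j:ℕ) = 0) by omega)] at e1
    rw [if_neg (show ¬((i:ℕ) = 2*k) by omega), if_neg (show ¬((j:ℕ) = 2*k) by omega),
        if_neg (show ¬((j:ℕ) = 0) by omega)]
    linarith
  · -- i < k, j > k : zero entry
    rw [dif_neg (show ¬((i:ℕ) ≤ k ∧ (j:ℕ) ≤ k) by omega),
        dif_neg (show ¬(k ≤ (i:ℕ) ∧ k ≤ (j:ℕ)) by omega),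
        dif_neg (show ¬((j:ℕ) ≤ k ∧ (i:ℕ) ≤ k) by omega),
        dif_neg (show ¬(k ≤ (j:ℕ) ∧ k ≤ (i:ℕ)) by omega)]
    rw [if_neg (show ¬((i:ℕ) = 2*k) by omega), if_neg (show ¬((j:ℕ) = 0) by omega)]
    ring
  · -- i = k, j < k : QL only
    rw [dif_pos (show (i:ℕ) ≤ k ∧ (j:ℕ) ≤ k by omega),
        dif_neg (show ¬(k ≤ (i:ℕ) ∧ k ≤ (j:ℕ)) by omega),
        dif_pos (show (j:ℕ) ≤ k ∧ (i:ℕ) ≤ k by omega),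
        dif_neg (show ¬(k ≤ (j:ℕ) ∧ k ≤ (i:ℕ)) by omega)]
    have e1 := HL ⟨(i:ℕ), by omega⟩ ⟨(j:ℕ), by omega⟩
    simp only [Fin.val_mk] at e1
    rw [if_pos (show (i:ℕ) = k by omega), if_neg (show ¬((j:ℕ) = k) by omega),
        if_neg (show ¬((i:ℕ) = 0) by omega)] at e1
    rw [if_neg (show ¬((i:ℕ) = 2*k) by omega), if_neg (show ¬((i:ℕ) = 0) by omega)]
    linarith
  · -- i = k, j = k : interface node, QL and QR both contribute
    rw [dif_pos (show (i:ℕ) ≤ k ∧ (j:ℕ) ≤ k by omega),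
        dif_pos (show k ≤ (i:ℕ) ∧ k ≤ (j:ℕ) by omega),
        dif_pos (show (j:ℕ) ≤ k ∧ (i:ℕ) ≤ k by omega),
        dif_pos (show k ≤ (j:ℕ) ∧ k ≤ (i:ℕ) by omega)]
    have e1 := HL ⟨(i:ℕ), by omega⟩ ⟨(j:ℕ), by omega⟩
    have e2 := HR ⟨(i:ℕ) - k, by omega⟩ ⟨(j:ℕ) - k, by omega⟩
    simp only [Fin.val_mk] at e1 e2
    rw [if_pos (show (i:ℕ) = k by omega), if_pos (show (j:ℕ) = k by omega),
        if_neg (show ¬((i:ℕ) = 0) by omega)] at e1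
    rw [if_neg (show ¬((i:ℕ) - k = k) by omega), if_pos (show (i:ℕ) - k = 0 by omega),
        if_pos (show (j:ℕ) - k = 0 by omega)] at e2
    rw [if_neg (show ¬((i:ℕ) = 2*k) by omega), if_neg (show ¬((i:ℕ) = 0) by omega)]
    linarith
  · -- i = k, j > k : QR only
    rw [dif_neg (show ¬((i:ℕ) ≤ k ∧ (j:ℕ) ≤ k) by omega),
        dif_pos (show k ≤ (i:ℕ) ∧ k ≤ (j:ℕ) by omega),
        dif_neg (show ¬((j:ℕ) ≤ k ∧ (i:ℕ) ≤ k) by omega),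
        dif_pos (show k ≤ (j:ℕ) ∧ k ≤ (i:ℕ) by omega)]
    have e2 := HR ⟨(i:ℕ) - k, by omega⟩ ⟨(j:ℕ) - k, by omega⟩
    simp only [Fin.val_mk] at e2
    rw [if_neg (show ¬((i:ℕ) - k = k) by omega), if_pos (show (i:ℕ) - k = 0 by omega),
        if_neg (show ¬((j:ℕ) - k = 0) by omega)] at e2
    rw [if_neg (show ¬((i:ℕ) = 2*k) by omega), if_neg (show ¬((i:ℕ) = 0) by omega)]
    linarith
  · -- i > k, j < k : zero entry
    rw [dif_neg (show ¬((i:ℕ) ≤ k ∧ (j:ℕ) ≤ k) by omega),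
        dif_neg (show ¬(k ≤ (i:ℕ) ∧ k ≤ (j:ℕ)) by omega),
        dif_neg (show ¬((j:ℕ) ≤ k ∧ (i:ℕ) ≤ k) by omega),
        dif_neg (show ¬(k ≤ (j:ℕ) ∧ k ≤ (i:ℕ)) by omega)]
    rw [if_neg (show ¬((j:ℕ) = 2*k) by omega), if_neg (show ¬((i:ℕ) = 0) by omega)]
    ring
  · -- i > k, j = k : QR only
    rw [dif_neg (show ¬((i:ℕ) ≤ k ∧ (j:ℕ) ≤ k) by omega),
        dif_pos (show k ≤ (i:ℕ) ∧ k ≤ (j:ℕ) by omega),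
        dif_neg (show ¬((j:ℕ) ≤ k ∧ (i:ℕ) ≤ k) by omega),
        dif_pos (show k ≤ (j:ℕ) ∧ k ≤ (i:ℕ) by omega)]
    have e2 := HR ⟨(i:ℕ) - k, by omega⟩ ⟨(j:ℕ) - k, by omega⟩
    simp only [Fin.val_mk] at e2
    rw [if_neg (show ¬((j:ℕ) - k = k) by omega), if_pos (show (j:ℕ) - k = 0 by omega),
        if_neg (show ¬((i:ℕ) - k = 0) by omega)] at e2
    rw [if_neg (show ¬((j:ℕ) = 2*k) by omega), if_neg (show ¬((j:ℕ) = 0) by omega)]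
    linarith
  · -- i > k, j > k : QR only
    rw [dif_neg (show ¬((i:ℕ) ≤ k ∧ (j:ℕ) ≤ k) by omega),
        dif_pos (show k ≤ (i:ℕ) ∧ k ≤ (j:ℕ) by omega),
        dif_neg (show ¬((j:ℕ) ≤ k ∧ (i:ℕ) ≤ k) by omega),
        dif_pos (show k ≤ (j:ℕ) ∧ k ≤ (i:ℕ) by omega)]
    have e2 := HR ⟨(i:ℕ) - k, by omega⟩ ⟨(j:ℕ) - k, by omega⟩
    simp only [Fin.val_mk] at e2
    rw [if_neg (show ¬((i:ℕ) - k = 0) by omega), if_neg (show ¬((j:ℕ) - k = 0) by omega),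
        if_congr (show ((i:ℕ) - k = k) ↔ ((i:ℕ) = 2*k) by omega) rfl rfl,
        if_congr (show ((j:ℕ) - k = k) ↔ ((j:ℕ) = 2*k) by omega) rfl rfl] at e2
    rw [if_neg (show ¬((i:ℕ) = 0) by omega), if_neg (show ¬((j:ℕ) = 0) by omega)]
    linarith
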